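/- Let X be a finite-dimensional real vector space, K ⊂ X a convex body with 0 in its interior, and Ψ the Minkowski norm (gauge) associated to K. Let L : X → X be a linear map with tr L = 0 such that ∂⁺_xΨ(L(x)) ≤ 0 for all x ∈ X. Then e^{tL}(K) = K for all t ∈ ℝ. -/

import Mathlib

set_option synthInstance.maxHeartbeats 1000000
set_option maxHeartbeats 1000000

open Filter Topology

section Aux

open NormedSpace Set MeasureTheory

variable {X : Type*} [NormedAddCommGroup X] [NormedSpace ℝ X] [FiniteDimensional ℝ X]

theorem aux_exp_add_comm {x y : X →L[ℝ] X} (h : Commute x y) :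
    exp (x + y) = exp x * exp y :=
  exp_add_of_commute_of_mem_ball (𝕂 := ℝ) h (by rw [expSeries_radius_eq_top]; simp)
    (by rw [expSeries_radius_eq_top]; simp)

theorem aux_det_exp_eq_one (T : X →L[ℝ] X)
    (htr : LinearMap.trace ℝ X (T : X →ₗ[ℝ] X) = 0) (t : ℝ) :
    LinearMap.det ((NormedSpace.exp (t • T) : X →L[ℝ] X) : X →ₗ[ℝ] X) = 1 := by
  classical
  set n := Module.finrank ℝ X with hn
  let b : Module.Basis (Fin n) ℝ X := Module.finBasis ℝ X
  let E : (X →L[ℝ] X) →ₗ[ℝ] Matrix (Fin n) (Fin n) ℝ :=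
    (LinearMap.toMatrix b b).toLinearMap ∘ₗ ContinuousLinearMap.coeLM ℝ
  let m : ℝ → Matrix (Fin n) (Fin n) ℝ := fun s => E (exp (s • T))
  let φ : ℝ → ℝ := fun s => (m s).det
  -- entrywise derivative
  have hm : ∀ (i j : Fin n) (s : ℝ),
      HasDerivAt (fun u => m u i j) (E (exp (s • T) * T) i j) s := by
    intro i j s
    let F : (X →L[ℝ] X) →L[ℝ] ℝ :=
      LinearMap.toContinuousLinearMap
        ((LinearMap.proj j) ∘ₗ (LinearMap.proj i) ∘ₗ E)
    have h1 : HasDerivAt (fun u : ℝ => exp (u • T)) (exp (s • T) * T) s :=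
      hasDerivAt_exp_smul_const T s
    have h2 := F.hasFDerivAt.comp_hasDerivAt s h1
    exact h2
  -- derivative of φ
  have hφder : ∀ s : ℝ, HasDerivAt φ
      (∑ σ : Equiv.Perm (Fin n), ((Equiv.Perm.sign σ : ℤ) : ℝ) *
        (∑ i : Fin n, (∏ j ∈ Finset.univ.erase i, m s (σ j) j) •
          (E (exp (s • T) * T) (σ i) i))) s := by
    intro s
    have hform : φ = fun u => ∑ σ : Equiv.Perm (Fin n),
        ((Equiv.Perm.sign σ : ℤ) : ℝ) * ∏ i : Fin n, m u (σ i) i := by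
      funext u
      exact Matrix.det_apply' (m u)
    rw [hform]
    exact HasDerivAt.fun_sum fun σ _ =>
      (HasDerivAt.fun_finsetProd (fun i _ => hm (σ i) i s)).const_mul _
  -- m 0 = 1
  have hm0 : m 0 = 1 := by
    have : exp ((0 : ℝ) • T) = 1 := by rw [zero_smul, exp_zero]
    simp only [m, this, E]
    simp [ContinuousLinearMap.one_def, LinearMap.toMatrix_id]
  -- derivative at 0 is trace = 0
  have hφ0 : HasDerivAt φ 0 0 := by
    have h := hφder 0
    have hTmat : E (exp ((0:ℝ) • T) * T) = E T := by
      rw [zero_smul, exp_zero, one_mul]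
    rw [hTmat, hm0] at h
    have htr' : (∑ i : Fin n, E T i i) = 0 := by
      have h1 : Matrix.trace (E T) = LinearMap.trace ℝ X (T : X →ₗ[ℝ] X) := by
        rw [LinearMap.trace_eq_matrix_trace ℝ b]; rfl
      simpa [Matrix.trace, Matrix.diag] using h1.trans htr
    convert h using 1
    symm
    rw [Finset.sum_eq_single (1 : Equiv.Perm (Fin n))]
    · have hone : ∀ x : Fin n, (∏ j ∈ Finset.univ.erase x,
          (1 : Matrix (Fin n) (Fin n) ℝ) ((1 : Equiv.Perm (Fin n)) j) j) = 1 := by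
        intro x
        refine Finset.prod_eq_one fun j _ => ?_
        show (1 : Matrix (Fin n) (Fin n) ℝ) j j = 1
        exact Matrix.one_apply_eq j
      simp only [hone, one_mul, smul_eq_mul, Equiv.Perm.sign_one, Units.val_one,
        Int.cast_one, Equiv.Perm.one_apply]
      exact htr'
    · intro σ _ hσ
      have hinner : ∀ i : Fin n,
          (∏ j ∈ Finset.univ.erase i, (1 : Matrix (Fin n) (Fin n) ℝ) (σ j) j) = 0 := by
        intro i
        obtain ⟨j₀, hj₀⟩ : ∃ j₀, σ j₀ ≠ j₀ := by
          by_contra h'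
          push_neg at h'
          exact hσ (Equiv.ext h')
        by_cases hji : j₀ = i
        · subst hji
          refine Finset.prod_eq_zero (i := σ j₀) ?_ ?_
          · simp [Finset.mem_erase, hj₀]
          · exact Matrix.one_apply_ne (fun h'' => hj₀ (σ.injective h''))
        · refine Finset.prod_eq_zero (i := j₀) ?_ ?_
          · simp [Finset.mem_erase, hji]
          · exact Matrix.one_apply_ne hj₀
      simp [hinner]
    · intro h; exact absurd (Finset.mem_univ _) h
  -- multiplicativity
  have hmul : ∀ u v : ℝ, φ (u + v) = φ u * φ v := by
    intro u v
    have hc : Commute (u • T) (v • T) := by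
      show _ = _
      rw [smul_mul_assoc, mul_smul_comm, smul_mul_assoc, mul_smul_comm, smul_comm]
    have h1 : exp ((u + v) • T) = exp (u • T) * exp (v • T) := by
      rw [add_smul]; exact aux_exp_add_comm hc
    have h2 : m (u + v) = m u * m v := by
      show (LinearMap.toMatrix b b) ((exp ((u+v) • T) : X →L[ℝ] X) : X →ₗ[ℝ] X) = _
      rw [h1, ContinuousLinearMap.mul_def, ContinuousLinearMap.toLinearMap_comp,
        LinearMap.toMatrix_comp b b b]
      rfl
    simp only [φ, h2, Matrix.det_mul]
  -- derivative everywhere is 0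
  have hφt : ∀ s : ℝ, HasDerivAt φ 0 s := by
    intro s
    have h2 : HasDerivAt (fun u : ℝ => u - s) 1 s := (hasDerivAt_id s).sub_const s
    have h3 := HasDerivAt.comp_of_eq s hφ0 h2 (by simp)
    have h4 := h3.const_mul (φ s)
    have h5 : (fun u : ℝ => φ s * (φ ∘ fun u => u - s) u) = φ := by
      funext u
      simp only [Function.comp]
      rw [← hmul, add_sub_cancel]
    rw [h5] at h4
    simpa using h4
  have hconst : φ t = φ 0 :=
    is_const_of_deriv_eq_zero (fun s => (hφt s).differentiableAt)
      (fun s => (hφt s).deriv) t 0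
  have hφ0val : φ 0 = 1 := by simp [φ, hm0]
  have : φ t = 1 := hconst.trans hφ0val
  calc LinearMap.det ((exp (t • T) : X →L[ℝ] X) : X →ₗ[ℝ] X)
      = (m t).det := (LinearMap.det_toMatrix b _).symm
    _ = 1 := this

theorem aux_gauge_exp_le (K : Set X) (hKconv : Convex ℝ K) (hK0 : K ∈ 𝓝 (0 : X))
    (L : X →ₗ[ℝ] X)
    (hdir : ∀ x : X, ∃ d : ℝ, d ≤ 0 ∧
      Tendsto (fun s : ℝ => (gauge K (x + s • L x) - gauge K x) / s) (𝓝[>] 0) (𝓝 d))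
    (x : X) {t : ℝ} (ht : 0 ≤ t) :
    gauge K (exp (t • L.toContinuousLinearMap) x) ≤ gauge K x := by
  set T := L.toContinuousLinearMap with hT
  set f : ℝ → ℝ := fun s => gauge K (exp (s • T) x) with hf
  have hcurve : ∀ y : X, ∀ s : ℝ, HasDerivAt (fun u : ℝ => exp (u • T) y)
      ((exp (s • T) * T) y) s := by
    intro y s
    have h1 : HasDerivAt (fun u : ℝ => exp (u • T)) (exp (s • T) * T) s :=
      hasDerivAt_exp_smul_const T s
    exact (ContinuousLinearMap.apply ℝ X y).hasFDerivAt.comp_hasDerivAt s h1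
  have hgc : Continuous (gauge K) := continuous_gauge hKconv hK0
  have hfc : Continuous f := by
    apply hgc.comp
    exact continuous_iff_continuousAt.2 fun s => (hcurve x s).continuousAt
  -- key slope limit at every point
  have hslope : ∀ x0 : ℝ, ∃ d ≤ (0:ℝ), Tendsto (slope f x0) (𝓝[>] x0) (𝓝 d) := by
    intro x0
    set y := exp (x0 • T) x with hy
    set u : ℝ → X := fun s => exp (s • T) y with hu_def
    obtain ⟨d, hd, hdt⟩ := hdir y
    refine ⟨d, hd, ?_⟩
    have hu0 : u 0 = y := by simp [hu_def, zero_smul, exp_zero]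
    have hexp : ∀ s : ℝ, exp ((x0 + s) • T) x = u s := by
      intro s
      have hc : Commute (s • T) (x0 • T) := by
        show _ = _
        rw [smul_mul_assoc, mul_smul_comm, smul_mul_assoc, mul_smul_comm, smul_comm]
      rw [add_smul, add_comm, aux_exp_add_comm hc, ContinuousLinearMap.mul_apply, ← hy]
    obtain ⟨C, hC⟩ := hKconv.lipschitz_gauge hK0
    have hu : HasDerivAt u (T y) 0 := by
      have := hcurve y 0
      simpa [zero_smul, exp_zero] using this
    have hu' : Tendsto (fun s : ℝ => slope u 0 s - T y) (𝓝[>] (0:ℝ)) (𝓝 0) := by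
      have h1 := hasDerivAt_iff_tendsto_slope.1 hu
      have h2 : Tendsto (slope u 0) (𝓝[>] (0:ℝ)) (𝓝 (T y)) :=
        h1.mono_left (nhdsWithin_mono 0 fun s hs => ne_of_gt hs)
      simpa using h2.sub_const (T y)
    -- second term tends to zero
    have hsecond : Tendsto
        (fun s : ℝ => (gauge K (u s) - gauge K (y + s • L y)) / s)
        (𝓝[>] (0:ℝ)) (𝓝 0) := by
      apply squeeze_zero_norm' (a := fun s => (C : ℝ) * ‖slope u 0 s - T y‖)
      · filter_upwards [self_mem_nhdsWithin] with s hs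
        have hs' : (0:ℝ) < s := hs
        have hdiff : u s - (y + s • L y) = s • (slope u 0 s - T y) := by
          rw [slope_def_module, sub_zero, smul_sub, smul_inv_smul₀ hs'.ne', hu0]
          have hLT : (L y : X) = T y := rfl
          rw [hLT]
          abel
        have hdist := hC.dist_le_mul (u s) (y + s • L y)
        rw [Real.dist_eq, dist_eq_norm, hdiff, norm_smul,
          Real.norm_of_nonneg hs'.le] at hdist
        rw [norm_div, Real.norm_of_nonneg hs'.le, div_le_iff₀ hs']
        calc |gauge K (u s) - gauge K (y + s • L y)|
            ≤ C * (s * ‖slope u 0 s - T y‖) := hdist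
          _ = C * ‖slope u 0 s - T y‖ * s := by ring
      · simpa using (tendsto_norm_zero.comp hu').const_mul (C : ℝ)
    -- limit of the slope of f shifted to 0
    have hG : Tendsto (fun s : ℝ => slope f x0 (x0 + s)) (𝓝[>] (0:ℝ)) (𝓝 d) := by
      have hsum := hdt.add hsecond
      rw [add_zero] at hsum
      apply hsum.congr'
      filter_upwards [self_mem_nhdsWithin] with s hs
      have hs' : (0:ℝ) < s := hs
      rw [slope_def_field, add_sub_cancel_left]
      have hfx0 : f x0 = gauge K y := rfl
      have hfx0s : f (x0 + s) = gauge K (u s) := by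
        simp only [hf]
        rw [hexp s]
      rw [hfx0, hfx0s, ← add_div]
      ring_nf
    -- transfer back
    have hsub : Tendsto (fun z : ℝ => z - x0) (𝓝[>] x0) (𝓝[>] (0:ℝ)) := by
      apply tendsto_nhdsWithin_of_tendsto_nhds_of_eventually_within
      · have : Tendsto (fun z : ℝ => z - x0) (𝓝 x0) (𝓝 (x0 - x0)) :=
          (continuous_id.sub continuous_const).tendsto x0
        rw [sub_self] at this
        exact this.mono_left nhdsWithin_le_nhds
      · filter_upwards [self_mem_nhdsWithin] with z hz
        exact sub_pos.2 (show x0 < z from hz)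
    have := (hG.comp hsub).congr (fun z => by
      simp only [Function.comp]
      rw [add_sub_cancel])
    exact this
  -- fencing
  have main : ∀ z ∈ Icc (0:ℝ) t, f z ≤ gauge K x := by
    have h := image_le_of_liminf_slope_right_le_deriv_boundary
      (f := f) (a := 0) (b := t) (B := fun _ => gauge K x) (B' := fun _ => 0)
      hfc.continuousOn
      (by simp [hf, zero_smul, exp_zero])
      continuousOn_const
      (fun z _ => hasDerivWithinAt_const z _ _)
      (fun z _ r hr => by
        obtain ⟨d, hd, hdt⟩ := hslope z
        exact (hdt.eventually_lt_const (lt_of_le_of_lt hd hr)).frequently)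
    exact h
  exact main t ⟨ht, le_refl t⟩

end Aux

open NormedSpace Set MeasureTheory in
/-- **Lemma.**  Let `K ⊂ X` be a convex body with `0` in its interior and `Ψ = gauge K` its
Minkowski norm.  Let `L : X → X` be a linear map with `tr L = 0` such that the one-sided
directional derivative `∂⁺ₓΨ(L x) = lim_{s↓0} (Ψ(x + s • L x) - Ψ(x))/s` is `≤ 0` for every
`x ∈ X`.  Then `e^{tL}(K) = K` for all `t ∈ ℝ`. -/
theorem exp_preserves_body
    {X : Type*} [NormedAddCommGroup X] [NormedSpace ℝ X] [FiniteDimensional ℝ X]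
    (K : Set X) (hKcomp : IsCompact K) (hKconv : Convex ℝ K)
    (h0 : (0 : X) ∈ interior K)
    (L : X →ₗ[ℝ] X)
    (htr : LinearMap.trace ℝ X L = 0)
    (hdir : ∀ x : X, ∃ d : ℝ, d ≤ 0 ∧
      Tendsto (fun s : ℝ => (gauge K (x + s • L x) - gauge K x) / s) (𝓝[>] 0) (𝓝 d)) :
    ∀ t : ℝ, (NormedSpace.exp (t • L.toContinuousLinearMap) : X →L[ℝ] X) '' K = K := by
  have hK0 : K ∈ 𝓝 (0 : X) := mem_interior_iff_mem_nhds.1 h0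
  set T := L.toContinuousLinearMap with hT
  have hTL : (T : X →ₗ[ℝ] X) = L := LinearMap.coe_toContinuousLinearMap L
  have hdet : ∀ s : ℝ,
      LinearMap.det ((exp (s • T) : X →L[ℝ] X) : X →ₗ[ℝ] X) = 1 := by
    intro s
    exact aux_det_exp_eq_one T (by rw [hTL]; exact htr) s
  have hclosed : IsClosed K := hKcomp.isClosed
  -- forward inclusion for nonnegative times
  have hsub : ∀ s : ℝ, 0 ≤ s → (exp (s • T) : X →L[ℝ] X) '' K ⊆ K := by
    rintro s hs z ⟨w, hw, rfl⟩
    have h1 : gauge K (exp (s • T) w) ≤ gauge K w :=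
      aux_gauge_exp_le K hKconv hK0 L hdir w hs
    have h2 : gauge K (exp (s • T) w) ≤ 1 := h1.trans (gauge_le_one_of_mem hw)
    have h3 := (gauge_le_one_iff_mem_closure hKconv hK0).1 h2
    rwa [hclosed.closure_eq] at h3
  -- equality for nonnegative times, via measure
  have key : ∀ s : ℝ, 0 ≤ s → (exp (s • T) : X →L[ℝ] X) '' K = K := by
    intro s hs
    borelize X
    set μ : Measure X := (Module.finBasis ℝ X).addHaar with hμ
    set A : Set X := (exp (s • T) : X →L[ℝ] X) '' K with hA
    have hAK : A ⊆ K := hsub s hs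
    have hAcomp : IsCompact A := hKcomp.image (exp (s • T)).continuous
    have hμA : μ A = μ K := by
      rw [hA, Measure.addHaar_image_continuousLinearMap, hdet s]
      simp
    refine Subset.antisymm hAK fun z hz => ?_
    by_contra hzA
    obtain ⟨ε, hε, hball⟩ := Metric.isOpen_iff.1 hAcomp.isClosed.isOpen_compl z hzA
    -- produce an interior point of K inside the ball around z
    set a : ℝ := min (1/2) (ε / (2 * (‖z‖ + 1))) with ha
    have haz : 0 < a := lt_min (by norm_num) (by positivity)
    have ha1 : a ≤ 1/2 := min_le_left _ _
    have ha2 : a ≤ ε / (2 * (‖z‖ + 1)) := min_le_right _ _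
    set p : X := a • (0:X) + (1-a) • z with hp
    have hpint : p ∈ interior K :=
      hKconv.combo_interior_self_mem_interior h0 hz haz (by linarith) (by ring)
    have hpd : dist p z < ε := by
      rw [hp, dist_eq_norm]
      have h1 : a • (0:X) + (1-a) • z - z = (-a) • z := by
        rw [smul_zero, zero_add, sub_smul, one_smul, neg_smul]
        abel
      rw [h1, norm_smul, Real.norm_eq_abs, abs_neg, abs_of_pos haz]
      have hz1 : (0:ℝ) ≤ ‖z‖ := norm_nonneg z
      have h2 : a * ‖z‖ ≤ (ε / (2 * (‖z‖ + 1))) * ‖z‖ :=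
        mul_le_mul_of_nonneg_right ha2 hz1
      have h3 : (ε / (2 * (‖z‖ + 1))) * ‖z‖ < ε := by
        rw [div_mul_eq_mul_div, div_lt_iff₀ (by positivity)]
        nlinarith
      linarith
    set U : Set X := interior K ∩ Metric.ball z ε with hU
    have hUopen : IsOpen U := isOpen_interior.inter Metric.isOpen_ball
    have hUne : U.Nonempty := ⟨p, hpint, Metric.mem_ball.2 hpd⟩
    have hUK : U ⊆ K := (inter_subset_left).trans interior_subset
    have hUA : Disjoint A U := by
      refine Set.disjoint_left.2 fun w hwA hwU => ?_
      exact hball hwU.2 hwA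
    have hle : μ A + μ U ≤ μ K := by
      rw [← measure_union hUA hUopen.measurableSet]
      exact measure_mono (union_subset hAK hUK)
    rw [hμA] at hle
    have hKfin : μ K ≠ ⊤ := hKcomp.measure_lt_top.ne
    have hU0 : μ U ≤ 0 := by
      refine ENNReal.le_of_add_le_add_left hKfin ?_
      simpa using hle
    have hUpos : 0 < μ U := hUopen.measure_pos μ hUne
    exact absurd (le_antisymm hU0 zero_le) hUpos.ne'
  intro t
  rcases le_or_gt 0 t with ht | ht
  · exact key t ht
  · have hneg := key (-t) (by linarith)
    have hcomp : ∀ z : X, exp (t • T) (exp (-t • T) z) = z := by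
      intro z
      have hc : Commute (t • T) (-t • T) := by
        show _ = _
        rw [smul_mul_assoc, mul_smul_comm, smul_mul_assoc, mul_smul_comm, smul_comm]
      have : exp (t • T) * exp (-t • T) = 1 := by
        rw [← aux_exp_add_comm hc]
        norm_num
      calc exp (t • T) (exp (-t • T) z)
          = (exp (t • T) * exp (-t • T)) z := rfl
        _ = z := by rw [this]; rfl
    calc (exp (t • T) : X →L[ℝ] X) '' K
        = (exp (t • T) : X →L[ℝ] X) '' ((exp (-t • T) : X →L[ℝ] X) '' K) := by
          rw [hneg]
      _ = K := by
          rw [← image_comp]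
          have : ((exp (t • T) : X →L[ℝ] X) ∘ (exp (-t • T) : X →L[ℝ] X)) = id := by
            funext z; exact hcomp z
          rw [this, image_id]
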